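/- Let G be a symmetric network congestion game on a series-parallel graph whose delay functions are affine, d_r(x) = a_r·x + b_r with a_r, b_r ≥ 0. Then every 1-lookahead outcome A satisfies SC(A) ≤ (4/3)·SC(B) for every outcome B; in particular the 1-Lookahead Price of Anarchy of G is at most 4/3. -/

import Mathlib

/-- A congestion game with `n` players on a finite resource type `R`:
each player has a finite set of actions (each action a set of resources),
and each resource has a delay function `ℕ → ℝ`. -/
structure CGame (R : Type) [DecidableEq R] [Fintype R] (n : ℕ) where
  actions : Fin n → Finset (Finset R)
  delay : R → ℕ → ℝ

namespace CGame

variable {R : Type} [DecidableEq R] [Fintype R] {n : ℕ}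

/-- The congestion `x(A)_r`: number of players using resource `r` in profile `A`. -/
def congestion (_G : CGame R n) (A : Fin n → Finset R) (r : R) : ℕ :=
  (Finset.univ.filter fun i => r ∈ A i).card

/-- The cost of player `i` in profile `A`. -/
def cost (G : CGame R n) (A : Fin n → Finset R) (i : Fin n) : ℝ :=
  ∑ r ∈ A i, G.delay r (G.congestion A r)

/-- `A` is an outcome: each player plays one of his actions. -/
def IsOutcome (G : CGame R n) (A : Fin n → Finset R) : Prop :=
  ∀ i, A i ∈ G.actions i

/-- `A` is a (pure) Nash equilibrium. -/
def IsNash (G : CGame R n) (A : Fin n → Finset R) : Prop :=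
  G.IsOutcome A ∧ ∀ i, ∀ B ∈ G.actions i, G.cost A i ≤ G.cost (Function.update A i B) i

/-- The subgame induced by the first player playing `a`. -/
def subgame (G : CGame R (n + 1)) (a : Finset R) : CGame R n where
  actions := fun i => G.actions i.succ
  delay := fun r y => G.delay r (y + if r ∈ a then 1 else 0)

/-- The subgame induced by the first `m` players playing `P`. -/
def subgameMany {m k : ℕ} (G : CGame R (m + k)) (P : Fin m → Finset R) : CGame R k where
  actions := fun i => G.actions (Fin.natAdd m i)
  delay := fun r y => G.delay r (y + (Finset.univ.filter fun i : Fin m => r ∈ P i).card)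

/-- `G^k`: the game on the first `min k n` players. -/
def truncate (G : CGame R n) (k : ℕ) : CGame R (min k n) where
  actions := fun i => G.actions (Fin.castLE (min_le_right k n) i)
  delay := G.delay

/-- The game reordered so that the player in position `i` is player `σ i`. -/
def reorder (G : CGame R n) (σ : Equiv.Perm (Fin n)) : CGame R n where
  actions := fun i => G.actions (σ i)
  delay := G.delay

/-- Subgame-perfect outcomes with respect to the order `1, …, n`. -/
def IsSPO : {n : ℕ} → CGame R n → (Fin n → Finset R) → Prop
  | 0, _, _ => True
  | _ + 1, G, A =>
      A 0 ∈ G.actions 0 ∧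
      ∃ f : Finset R → (Fin _ → Finset R),
        (∀ a ∈ G.actions 0, IsSPO (G.subgame a) (f a)) ∧
        f (A 0) = Fin.tail A ∧
        ∀ a ∈ G.actions 0,
          G.cost (Fin.cons (A 0) (f (A 0))) 0 ≤ G.cost (Fin.cons a (f a)) 0

/-- `k`-lookahead outcomes with respect to the order `1, …, n`. -/
def IsKLA (k : ℕ) : {n : ℕ} → CGame R n → (Fin n → Finset R) → Prop
  | 0, _, _ => True
  | n + 1, G, A =>
      (∃ (hk : 0 < min k (n + 1)) (B : Fin (min k (n + 1)) → Finset R),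
          IsSPO (G.truncate k) B ∧ B ⟨0, hk⟩ = A 0) ∧
      IsKLA k (G.subgame (A 0)) (Fin.tail A)

/-- `A` is a subgame-perfect outcome of `G` with respect to some order of the players. -/
def IsSPOutcome (G : CGame R n) (A : Fin n → Finset R) : Prop :=
  ∃ σ : Equiv.Perm (Fin n), IsSPO (G.reorder σ) (A ∘ σ)

/-- `A` is a `k`-lookahead outcome of `G` with respect to some order of the players. -/
def IsKLO (k : ℕ) (G : CGame R n) (A : Fin n → Finset R) : Prop :=
  ∃ σ : Equiv.Perm (Fin n), IsKLA k (G.reorder σ) (A ∘ σ)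

/-- The cost of player `i` when only the players in `s` play (profile restricted to `s`). -/
def costOn (G : CGame R n) (s : Finset (Fin n)) (A : Fin n → Finset R) (i : Fin n) : ℝ :=
  ∑ r ∈ A i, G.delay r ((s.filter fun j => r ∈ A j).card)

/-- `G` is generic: in every restriction of the game to a subset of the players,
a player's cost changes whenever his own action changes. -/
def Generic (G : CGame R n) : Prop :=
  ∀ s : Finset (Fin n), ∀ A B : Fin n → Finset R,
    (∀ i ∈ s, A i ∈ G.actions i) → (∀ i ∈ s, B i ∈ G.actions i) →
    ∀ j ∈ s, A j ≠ B j → G.costOn s A j ≠ G.costOn s B j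

/-- Utilitarian social cost. -/
def SC (G : CGame R n) (A : Fin n → Finset R) : ℝ :=
  ∑ i, G.cost A i

/-- Minimum social cost over all outcomes. -/
noncomputable def optSC (G : CGame R n) : ℝ :=
  sInf {y | ∃ A, G.IsOutcome A ∧ y = G.SC A}

/-- The `k`-Lookahead Price of Anarchy. -/
noncomputable def kLPoA (G : CGame R n) (k : ℕ) : ℝ :=
  sSup {y | ∃ A, IsKLO k G A ∧ y = G.SC A / G.optSC}

/-- The Price of Anarchy. -/
noncomputable def PoA (G : CGame R n) : ℝ :=
  sSup {y | ∃ A, G.IsNash A ∧ y = G.SC A / G.optSC}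

/-- Opportunity cost `O_A` of an outcome `A` in a symmetric game with action set `𝒜`. -/
noncomputable def oppCost (G : CGame R n) (𝒜 : Finset (Finset R)) (A : Fin n → Finset R) : ℝ :=
  sInf {y | ∃ P ∈ 𝒜, y = ∑ r ∈ P, G.delay r (G.congestion A r + 1)}

/-- Worst cost (egalitarian social cost) `W_A` of an outcome `A`. -/
noncomputable def worstCost (G : CGame R n) (A : Fin n → Finset R) : ℝ :=
  sSup {y | ∃ i, y = G.cost A i}

/-- Rosenthal's potential function. -/
def potential (G : CGame R n) (A : Fin n → Finset R) : ℝ :=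
  ∑ r : R, ∑ i ∈ Finset.Icc 1 (G.congestion A r), G.delay r i

end CGame
/-- Syntax trees of extension-parallel graphs: a single arc; parallel composition;
series composition of a single arc with an EP graph (arc first or arc last). -/
inductive EPTree : Type
  | edge : EPTree
  | parallel : EPTree → EPTree → EPTree
  | extHead : EPTree → EPTree
  | extTail : EPTree → EPTree

namespace EPTree

/-- The arcs of an extension-parallel graph. -/
def Arc : EPTree → Type
  | edge => Unit
  | parallel t₁ t₂ => t₁.Arc ⊕ t₂.Arc
  | extHead t => Unit ⊕ t.Arc
  | extTail t => t.Arc ⊕ Unit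

def arcDecEq : (t : EPTree) → DecidableEq t.Arc
  | edge => inferInstanceAs (DecidableEq Unit)
  | parallel t₁ t₂ =>
      letI := t₁.arcDecEq; letI := t₂.arcDecEq
      inferInstanceAs (DecidableEq (t₁.Arc ⊕ t₂.Arc))
  | extHead t =>
      letI := t.arcDecEq
      inferInstanceAs (DecidableEq (Unit ⊕ t.Arc))
  | extTail t =>
      letI := t.arcDecEq
      inferInstanceAs (DecidableEq (t.Arc ⊕ Unit))

instance (t : EPTree) : DecidableEq t.Arc := t.arcDecEq

def arcFintype : (t : EPTree) → Fintype t.Arc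
  | edge => inferInstanceAs (Fintype Unit)
  | parallel t₁ t₂ =>
      letI := t₁.arcFintype; letI := t₂.arcFintype
      inferInstanceAs (Fintype (t₁.Arc ⊕ t₂.Arc))
  | extHead t =>
      letI := t.arcFintype
      inferInstanceAs (Fintype (Unit ⊕ t.Arc))
  | extTail t =>
      letI := t.arcFintype
      inferInstanceAs (Fintype (t.Arc ⊕ Unit))

instance (t : EPTree) : Fintype t.Arc := t.arcFintype

/-- The set of arc sets of directed `o`–`d` paths of an extension-parallel graph. -/
def paths : (t : EPTree) → Finset (Finset t.Arc)
  | edge => {(Finset.univ : Finset Unit)}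
  | parallel t₁ t₂ =>
      (t₁.paths.image fun P => P.image Sum.inl) ∪ (t₂.paths.image fun P => P.image Sum.inr)
  | extHead t => t.paths.image fun P => insert (Sum.inl ()) (P.image Sum.inr)
  | extTail t => t.paths.image fun P => insert (Sum.inr ()) (P.image Sum.inl)

end EPTree

/-- Syntax trees of series-parallel graphs: a single arc; series composition;
parallel composition. -/
inductive SPTree : Type
  | edge : SPTree
  | series : SPTree → SPTree → SPTree
  | parallel : SPTree → SPTree → SPTree

namespace SPTree

/-- The arcs of a series-parallel graph. -/
def Arc : SPTree → Type
  | edge => Unit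
  | series t₁ t₂ => t₁.Arc ⊕ t₂.Arc
  | parallel t₁ t₂ => t₁.Arc ⊕ t₂.Arc

def arcDecEq : (t : SPTree) → DecidableEq t.Arc
  | edge => inferInstanceAs (DecidableEq Unit)
  | series t₁ t₂ =>
      letI := t₁.arcDecEq; letI := t₂.arcDecEq
      inferInstanceAs (DecidableEq (t₁.Arc ⊕ t₂.Arc))
  | parallel t₁ t₂ =>
      letI := t₁.arcDecEq; letI := t₂.arcDecEq
      inferInstanceAs (DecidableEq (t₁.Arc ⊕ t₂.Arc))

instance (t : SPTree) : DecidableEq t.Arc := t.arcDecEq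

def arcFintype : (t : SPTree) → Fintype t.Arc
  | edge => inferInstanceAs (Fintype Unit)
  | series t₁ t₂ =>
      letI := t₁.arcFintype; letI := t₂.arcFintype
      inferInstanceAs (Fintype (t₁.Arc ⊕ t₂.Arc))
  | parallel t₁ t₂ =>
      letI := t₁.arcFintype; letI := t₂.arcFintype
      inferInstanceAs (Fintype (t₁.Arc ⊕ t₂.Arc))

instance (t : SPTree) : Fintype t.Arc := t.arcFintype

/-- The set of arc sets of directed `o`–`d` paths of a series-parallel graph. -/
def paths : (t : SPTree) → Finset (Finset t.Arc)
  | edge => {(Finset.univ : Finset Unit)}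
  | series t₁ t₂ =>
      (t₁.paths ×ˢ t₂.paths).image fun p => p.1.image Sum.inl ∪ p.2.image Sum.inr
  | parallel t₁ t₂ =>
      (t₁.paths.image fun P => P.image Sum.inl) ∪ (t₂.paths.image fun P => P.image Sum.inr)

/-- A series-parallel graph is extension-parallel if in every series composition one of
the two parts is a single arc. -/
def IsEP : SPTree → Prop
  | edge => True
  | series t₁ t₂ => (t₁ = edge ∧ t₂.IsEP) ∨ (t₂ = edge ∧ t₁.IsEP)
  | parallel t₁ t₂ => t₁.IsEP ∧ t₂.IsEP

end SPTree

/-- The symmetric network congestion game with `n` players on an extension-parallel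
graph `t` with delay functions `d`. -/
def SNCGep (t : EPTree) (d : t.Arc → ℕ → ℝ) (n : ℕ) : CGame t.Arc n where
  actions := fun _ => t.paths
  delay := d

/-- The symmetric network congestion game with `n` players on a series-parallel
graph `t` with delay functions `d`. -/
def SNCGsp (t : SPTree) (d : t.Arc → ℕ → ℝ) (n : ℕ) : CGame t.Arc n where
  actions := fun _ => t.paths
  delay := d

namespace SPAux
open Finset

variable {R : Type} [DecidableEq R] [Fintype R]

/-- Add one unit of congestion along path `P`. -/
def addP (x : R → ℕ) (P : Finset R) : R → ℕ := fun r => x r + (if r ∈ P then 1 else 0)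

/-- Marginal cost of path `P` on top of congestion `x`. -/
def margc (d : R → ℕ → ℝ) (x : R → ℕ) (P : Finset R) : ℝ := ∑ r ∈ P, d r (x r + 1)

/-- Rosenthal potential of a congestion vector. -/
def Phi (d : R → ℕ → ℝ) (x : R → ℕ) : ℝ := ∑ r, ∑ i ∈ Finset.Icc 1 (x r), d r i

def Esum (d : R → ℕ → ℝ) (x y : R → ℕ) : ℝ :=
  ∑ r, (((x r - y r : ℕ) : ℝ) * d r (x r) - ((y r - x r : ℕ) : ℝ) * d r (x r + 1))

def Mono (d : R → ℕ → ℝ) : Prop := ∀ r, Monotone (d r)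
def Nneg (d : R → ℕ → ℝ) : Prop := ∀ r k, 0 ≤ d r k

lemma Phi_addP (d : R → ℕ → ℝ) (x : R → ℕ) (P : Finset R) :
    Phi d (addP x P) = Phi d x + margc d x P := by
  unfold Phi addP margc
  have h : ∀ r : R, ∑ i ∈ Finset.Icc 1 (x r + (if r ∈ P then 1 else 0)), d r i
      = (∑ i ∈ Finset.Icc 1 (x r), d r i) + (if r ∈ P then d r (x r + 1) else 0) := by
    intro r
    by_cases hr : r ∈ P
    · simp only [hr, if_true]
      rw [Finset.sum_Icc_succ_top (by omega : 1 ≤ x r + 1)]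
    · simp [hr]
  simp only [h, Finset.sum_add_distrib]
  congr 1
  rw [Finset.sum_ite_mem, Finset.univ_inter]

/-- Congestion vectors reachable by `m` paths from `𝒜`. -/
def Reach (𝒜 : Finset (Finset R)) : ℕ → Finset (R → ℕ)
  | 0 => {fun _ => 0}
  | m + 1 => (Reach 𝒜 m).biUnion fun x => 𝒜.image (addP x)

lemma mem_reach_zero {𝒜 : Finset (Finset R)} {x : R → ℕ} :
    x ∈ Reach 𝒜 0 ↔ x = fun _ => 0 := by simp [Reach]

lemma mem_reach_succ {𝒜 : Finset (Finset R)} {m : ℕ} {x : R → ℕ} :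
    x ∈ Reach 𝒜 (m + 1) ↔ ∃ u ∈ Reach 𝒜 m, ∃ P ∈ 𝒜, x = addP u P := by
  simp [Reach, Finset.mem_biUnion, Finset.mem_image, eq_comm]

lemma reach_nonempty {𝒜 : Finset (Finset R)} (h : 𝒜.Nonempty) (m : ℕ) :
    (Reach 𝒜 m).Nonempty := by
  induction m with
  | zero => exact ⟨_, mem_reach_zero.2 rfl⟩
  | succ m ih =>
    obtain ⟨x, hx⟩ := ih
    obtain ⟨P, hP⟩ := h
    exact ⟨addP x P, mem_reach_succ.2 ⟨x, hx, P, hP, rfl⟩⟩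

/-- Optimal potential over all congestion vectors reachable by `m` paths. -/
noncomputable def Cm (d : R → ℕ → ℝ) (𝒜 : Finset (Finset R)) (m : ℕ) : ℝ :=
  sInf (Phi d '' (Reach 𝒜 m : Set (R → ℕ)))

lemma Cm_le {d : R → ℕ → ℝ} {𝒜 : Finset (Finset R)} {m : ℕ} {x : R → ℕ}
    (hx : x ∈ Reach 𝒜 m) : Cm d 𝒜 m ≤ Phi d x := by
  refine csInf_le (Set.Finite.bddBelow (Set.Finite.image _ (Reach 𝒜 m).finite_toSet)) ?_
  exact ⟨x, by simpa using hx, rfl⟩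

lemma exists_Cm {d : R → ℕ → ℝ} {𝒜 : Finset (Finset R)} (h : 𝒜.Nonempty) (m : ℕ) :
    ∃ x ∈ Reach 𝒜 m, Phi d x = Cm d 𝒜 m := by
  have h1 : (Phi d '' (Reach 𝒜 m : Set (R → ℕ))).Nonempty := by
    obtain ⟨x, hx⟩ := reach_nonempty h m
    exact ⟨Phi d x, ⟨x, by simpa using hx, rfl⟩⟩
  have h2 := h1.csInf_mem (Set.Finite.image _ (Reach 𝒜 m).finite_toSet)
  obtain ⟨x, hx, hPhi⟩ := h2
  exact ⟨x, by simpa using hx, hPhi⟩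

lemma delta_mono {f : ℕ → ℝ} (h : ∀ m, f (m + 1) - f m ≤ f (m + 2) - f (m + 1)) :
    ∀ i j : ℕ, i ≤ j → f (i + 1) - f i ≤ f (j + 1) - f j := by
  intro i j hij
  induction j with
  | zero =>
    have : i = 0 := by omega
    subst this; rfl
  | succ j ihj =>
    rcases Nat.lt_or_ge i (j + 1) with h1 | h1
    · exact le_trans (ihj (by omega)) (h j)
    · have : i = j + 1 := by omega
      subst this; rfl

end SPAux
set_option linter.unusedSectionVars false
namespace SPAux
open Finset

variable {α β : Type} [DecidableEq α] [Fintype α] [DecidableEq β] [Fintype β]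

def Aser (𝒜₁ : Finset (Finset α)) (𝒜₂ : Finset (Finset β)) : Finset (Finset (α ⊕ β)) :=
  (𝒜₁ ×ˢ 𝒜₂).image fun p => p.1.image Sum.inl ∪ p.2.image Sum.inr

def Apar (𝒜₁ : Finset (Finset α)) (𝒜₂ : Finset (Finset β)) : Finset (Finset (α ⊕ β)) :=
  (𝒜₁.image fun P => P.image Sum.inl) ∪ (𝒜₂.image fun P => P.image Sum.inr)

lemma mem_inl_union {a : α} {P₁ : Finset α} {P₂ : Finset β} :
    (Sum.inl a ∈ P₁.image Sum.inl ∪ P₂.image Sum.inr) ↔ a ∈ P₁ := by simp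

lemma mem_inr_union {b : β} {P₁ : Finset α} {P₂ : Finset β} :
    (Sum.inr b ∈ P₁.image Sum.inl ∪ P₂.image Sum.inr) ↔ b ∈ P₂ := by simp

lemma glue_eq (x : α ⊕ β → ℕ) : x = Sum.elim (x ∘ Sum.inl) (x ∘ Sum.inr) := by
  funext r; cases r <;> rfl

lemma addP_union_inl (x : α ⊕ β → ℕ) (P₁ : Finset α) (P₂ : Finset β) :
    (addP x (P₁.image Sum.inl ∪ P₂.image Sum.inr)) ∘ Sum.inl = addP (x ∘ Sum.inl) P₁ := by
  funext a; simp [addP, Function.comp]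

lemma addP_union_inr (x : α ⊕ β → ℕ) (P₁ : Finset α) (P₂ : Finset β) :
    (addP x (P₁.image Sum.inl ∪ P₂.image Sum.inr)) ∘ Sum.inr = addP (x ∘ Sum.inr) P₂ := by
  funext a; simp [addP, Function.comp]

lemma addP_inl_inl (x : α ⊕ β → ℕ) (P₁ : Finset α) :
    (addP x (P₁.image Sum.inl)) ∘ Sum.inl = addP (x ∘ Sum.inl) P₁ := by
  funext a; simp [addP, Function.comp]

lemma addP_inl_inr (x : α ⊕ β → ℕ) (P₁ : Finset α) :
    (addP x (P₁.image Sum.inl)) ∘ Sum.inr = x ∘ Sum.inr := by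
  funext a; simp [addP, Function.comp]

lemma addP_inr_inl (x : α ⊕ β → ℕ) (P₂ : Finset β) :
    (addP x (P₂.image Sum.inr)) ∘ Sum.inl = x ∘ Sum.inl := by
  funext a; simp [addP, Function.comp]

lemma addP_inr_inr (x : α ⊕ β → ℕ) (P₂ : Finset β) :
    (addP x (P₂.image Sum.inr)) ∘ Sum.inr = addP (x ∘ Sum.inr) P₂ := by
  funext a; simp [addP, Function.comp]

lemma Phi_sum (d : α ⊕ β → ℕ → ℝ) (x : α ⊕ β → ℕ) :
    Phi d x = Phi (d ∘ Sum.inl) (x ∘ Sum.inl) + Phi (d ∘ Sum.inr) (x ∘ Sum.inr) := by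
  unfold Phi; exact Fintype.sum_sum_type _

lemma Esum_sum (d : α ⊕ β → ℕ → ℝ) (x y : α ⊕ β → ℕ) :
    Esum d x y = Esum (d ∘ Sum.inl) (x ∘ Sum.inl) (y ∘ Sum.inl)
      + Esum (d ∘ Sum.inr) (x ∘ Sum.inr) (y ∘ Sum.inr) := by
  unfold Esum; exact Fintype.sum_sum_type _

lemma margc_image_inl (d : α ⊕ β → ℕ → ℝ) (x : α ⊕ β → ℕ) (P : Finset α) :
    margc d x (P.image Sum.inl) = margc (d ∘ Sum.inl) (x ∘ Sum.inl) P := by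
  unfold margc
  rw [Finset.sum_image (fun _ _ _ _ h => Sum.inl.inj h)]
  rfl

lemma margc_image_inr (d : α ⊕ β → ℕ → ℝ) (x : α ⊕ β → ℕ) (P : Finset β) :
    margc d x (P.image Sum.inr) = margc (d ∘ Sum.inr) (x ∘ Sum.inr) P := by
  unfold margc
  rw [Finset.sum_image (fun _ _ _ _ h => Sum.inr.inj h)]
  rfl

lemma margc_union (d : α ⊕ β → ℕ → ℝ) (x : α ⊕ β → ℕ) (P₁ : Finset α) (P₂ : Finset β) :
    margc d x (P₁.image Sum.inl ∪ P₂.image Sum.inr)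
      = margc (d ∘ Sum.inl) (x ∘ Sum.inl) P₁ + margc (d ∘ Sum.inr) (x ∘ Sum.inr) P₂ := by
  unfold margc
  rw [Finset.sum_union]
  · rw [Finset.sum_image (fun _ _ _ _ h => Sum.inl.inj h),
      Finset.sum_image (fun _ _ _ _ h => Sum.inr.inj h)]
    rfl
  · rw [Finset.disjoint_left]
    rintro r hr1 hr2
    simp only [Finset.mem_image] at hr1 hr2
    obtain ⟨a, -, rfl⟩ := hr1
    obtain ⟨c, -, hc⟩ := hr2
    exact absurd hc (by simp)

lemma reach_ser {𝒜₁ : Finset (Finset α)} {𝒜₂ : Finset (Finset β)} :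
    ∀ (m : ℕ) (x : α ⊕ β → ℕ), x ∈ Reach (Aser 𝒜₁ 𝒜₂) m ↔
      (x ∘ Sum.inl ∈ Reach 𝒜₁ m ∧ x ∘ Sum.inr ∈ Reach 𝒜₂ m) := by
  intro m
  induction m with
  | zero =>
    intro x
    simp only [mem_reach_zero]
    constructor
    · rintro rfl; exact ⟨rfl, rfl⟩
    · rintro ⟨h1, h2⟩
      funext r
      cases r with
      | inl a => exact congrFun h1 a
      | inr c => exact congrFun h2 c
  | succ m ih =>
    intro x
    simp only [mem_reach_succ]
    constructor
    · rintro ⟨u, hu, P, hP, rfl⟩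
      simp only [Aser, Finset.mem_image, Finset.mem_product] at hP
      obtain ⟨⟨P₁, P₂⟩, ⟨hP₁, hP₂⟩, rfl⟩ := hP
      rw [addP_union_inl, addP_union_inr]
      obtain ⟨hul, hur⟩ := (ih u).1 hu
      exact ⟨⟨u ∘ Sum.inl, hul, P₁, hP₁, rfl⟩, ⟨u ∘ Sum.inr, hur, P₂, hP₂, rfl⟩⟩
    · rintro ⟨⟨u₁, hu₁, P₁, hP₁, hx₁⟩, ⟨u₂, hu₂, P₂, hP₂, hx₂⟩⟩
      refine ⟨Sum.elim u₁ u₂, (ih _).2 ⟨hu₁, hu₂⟩, P₁.image Sum.inl ∪ P₂.image Sum.inr,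
        ?_, ?_⟩
      · exact Finset.mem_image.2 ⟨(P₁, P₂), Finset.mem_product.2 ⟨hP₁, hP₂⟩, rfl⟩
      · funext r
        cases r with
        | inl a =>
          have := congrFun hx₁ a
          simp only [addP, Function.comp] at this
          simpa [addP] using this
        | inr c =>
          have := congrFun hx₂ c
          simp only [addP, Function.comp] at this
          simpa [addP] using this

lemma reach_par {𝒜₁ : Finset (Finset α)} {𝒜₂ : Finset (Finset β)} :
    ∀ (m : ℕ) (x : α ⊕ β → ℕ), x ∈ Reach (Apar 𝒜₁ 𝒜₂) m ↔
      ∃ k, k ≤ m ∧ x ∘ Sum.inl ∈ Reach 𝒜₁ k ∧ x ∘ Sum.inr ∈ Reach 𝒜₂ (m - k) := by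
  intro m
  induction m with
  | zero =>
    intro x
    simp only [mem_reach_zero]
    constructor
    · rintro rfl
      exact ⟨0, le_refl 0, mem_reach_zero.2 rfl, mem_reach_zero.2 rfl⟩
    · rintro ⟨k, hk, h1, h2⟩
      interval_cases k
      rw [mem_reach_zero] at h1 h2
      funext r
      cases r with
      | inl a => exact congrFun h1 a
      | inr c => exact congrFun h2 c
  | succ m ih =>
    intro x
    constructor
    · intro hx
      obtain ⟨u, hu, P, hP, rfl⟩ := mem_reach_succ.1 hx
      obtain ⟨k, hk, hul, hur⟩ := (ih u).1 hu
      simp only [Apar, Finset.mem_union, Finset.mem_image] at hP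
      rcases hP with ⟨P₁, hP₁, rfl⟩ | ⟨P₂, hP₂, rfl⟩
      · refine ⟨k + 1, by omega, ?_, ?_⟩
        · rw [addP_inl_inl]
          exact mem_reach_succ.2 ⟨u ∘ Sum.inl, hul, P₁, hP₁, rfl⟩
        · rw [addP_inl_inr]
          have : m + 1 - (k + 1) = m - k := by omega
          rw [this]; exact hur
      · refine ⟨k, by omega, ?_, ?_⟩
        · rw [addP_inr_inl]; exact hul
        · rw [addP_inr_inr]
          have : m + 1 - k = (m - k) + 1 := by omega
          rw [this]
          exact mem_reach_succ.2 ⟨u ∘ Sum.inr, hur, P₂, hP₂, rfl⟩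
    · rintro ⟨k, hk, h1, h2⟩
      rcases Nat.eq_zero_or_pos k with rfl | hkpos
      · -- right side has m+1 units
        have h2' : x ∘ Sum.inr ∈ Reach 𝒜₂ (m + 1) := by simpa using h2
        obtain ⟨u₂, hu₂, P₂, hP₂, hx₂⟩ := mem_reach_succ.1 h2'
        refine mem_reach_succ.2 ⟨Sum.elim (x ∘ Sum.inl) u₂,
          (ih _).2 ⟨0, by omega, by simpa using h1, by simpa using hu₂⟩,
          P₂.image Sum.inr, Finset.mem_union_right _ (Finset.mem_image_of_mem _ hP₂), ?_⟩
        funext r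
        cases r with
        | inl a => simp [addP]
        | inr c =>
          have := congrFun hx₂ c
          simp only [addP, Function.comp] at this ⊢
          simpa using this
      · obtain ⟨k', rfl⟩ : ∃ k', k = k' + 1 := ⟨k - 1, by omega⟩
        obtain ⟨u₁, hu₁, P₁, hP₁, hx₁⟩ := mem_reach_succ.1 h1
        refine mem_reach_succ.2 ⟨Sum.elim u₁ (x ∘ Sum.inr),
          (ih _).2 ⟨k', by omega, by simpa using hu₁, ?_⟩,
          P₁.image Sum.inl, Finset.mem_union_left _ (Finset.mem_image_of_mem _ hP₁), ?_⟩
        · have : m - k' = m + 1 - (k' + 1) := by omega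
          rw [this]; simpa using h2
        · funext r
          cases r with
          | inl a =>
            have := congrFun hx₁ a
            simp only [addP, Function.comp] at this ⊢
            simpa using this
          | inr c => simp [addP]

end SPAux
namespace SPAux
open Finset

variable {α β : Type} [DecidableEq α] [Fintype α] [DecidableEq β] [Fintype β]
variable {𝒜₁ : Finset (Finset α)} {𝒜₂ : Finset (Finset β)}
variable {d : α ⊕ β → ℕ → ℝ}

lemma Cm_ser (h₁ : 𝒜₁.Nonempty) (h₂ : 𝒜₂.Nonempty) (m : ℕ) :
    Cm d (Aser 𝒜₁ 𝒜₂) m = Cm (d ∘ Sum.inl) 𝒜₁ m + Cm (d ∘ Sum.inr) 𝒜₂ m := by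
  apply le_antisymm
  · obtain ⟨x₁, hx₁, hP₁⟩ := exists_Cm (d := d ∘ Sum.inl) h₁ m
    obtain ⟨x₂, hx₂, hP₂⟩ := exists_Cm (d := d ∘ Sum.inr) h₂ m
    have hx : Sum.elim x₁ x₂ ∈ Reach (Aser 𝒜₁ 𝒜₂) m := (reach_ser m _).2 ⟨hx₁, hx₂⟩
    calc Cm d (Aser 𝒜₁ 𝒜₂) m ≤ Phi d (Sum.elim x₁ x₂) := Cm_le hx
    _ = _ := by rw [Phi_sum]; rw [← hP₁, ← hP₂]; rfl
  · have hser : (Aser 𝒜₁ 𝒜₂).Nonempty := by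
      obtain ⟨P₁, hP₁⟩ := h₁; obtain ⟨P₂, hP₂⟩ := h₂
      exact ⟨_, Finset.mem_image.2 ⟨(P₁, P₂), Finset.mem_product.2 ⟨hP₁, hP₂⟩, rfl⟩⟩
    obtain ⟨x, hx, hP⟩ := exists_Cm (d := d) hser m
    obtain ⟨hxl, hxr⟩ := (reach_ser m x).1 hx
    rw [← hP, Phi_sum]
    exact add_le_add (Cm_le hxl) (Cm_le hxr)

lemma Apar_nonempty (h₁ : 𝒜₁.Nonempty) : (Apar 𝒜₁ 𝒜₂).Nonempty := by
  obtain ⟨P₁, hP₁⟩ := h₁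
  exact ⟨_, Finset.mem_union_left _ (Finset.mem_image_of_mem _ hP₁)⟩

lemma Cm_par_le (h₁ : 𝒜₁.Nonempty) (h₂ : 𝒜₂.Nonempty) {k m : ℕ} (hk : k ≤ m) :
    Cm d (Apar 𝒜₁ 𝒜₂) m ≤ Cm (d ∘ Sum.inl) 𝒜₁ k + Cm (d ∘ Sum.inr) 𝒜₂ (m - k) := by
  obtain ⟨x₁, hx₁, hP₁⟩ := exists_Cm (d := d ∘ Sum.inl) h₁ k
  obtain ⟨x₂, hx₂, hP₂⟩ := exists_Cm (d := d ∘ Sum.inr) h₂ (m - k)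
  have hx : Sum.elim x₁ x₂ ∈ Reach (Apar 𝒜₁ 𝒜₂) m := (reach_par m _).2 ⟨k, hk, hx₁, hx₂⟩
  calc Cm d (Apar 𝒜₁ 𝒜₂) m ≤ Phi d (Sum.elim x₁ x₂) := Cm_le hx
  _ = _ := by rw [Phi_sum]; rw [← hP₁, ← hP₂]; rfl

/-- Decomposition of an optimal congestion vector in a parallel composition. -/
lemma par_opt_decomp (h₁ : 𝒜₁.Nonempty) (h₂ : 𝒜₂.Nonempty) {m : ℕ} {x : α ⊕ β → ℕ}
    (hx : x ∈ Reach (Apar 𝒜₁ 𝒜₂) m) (hopt : Phi d x = Cm d (Apar 𝒜₁ 𝒜₂) m) :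
    ∃ k, k ≤ m ∧ x ∘ Sum.inl ∈ Reach 𝒜₁ k ∧ x ∘ Sum.inr ∈ Reach 𝒜₂ (m - k) ∧
      Phi (d ∘ Sum.inl) (x ∘ Sum.inl) = Cm (d ∘ Sum.inl) 𝒜₁ k ∧
      Phi (d ∘ Sum.inr) (x ∘ Sum.inr) = Cm (d ∘ Sum.inr) 𝒜₂ (m - k) ∧
      Cm d (Apar 𝒜₁ 𝒜₂) m = Cm (d ∘ Sum.inl) 𝒜₁ k + Cm (d ∘ Sum.inr) 𝒜₂ (m - k) := by
  obtain ⟨k, hk, hxl, hxr⟩ := (reach_par m x).1 hx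
  have h1 := Cm_le (d := d ∘ Sum.inl) hxl
  have h2 := Cm_le (d := d ∘ Sum.inr) hxr
  have h3 := Cm_par_le (d := d) h₁ h₂ hk
  have h4 : Phi d x = Phi (d ∘ Sum.inl) (x ∘ Sum.inl) + Phi (d ∘ Sum.inr) (x ∘ Sum.inr) :=
    Phi_sum d x
  exact ⟨k, hk, hxl, hxr, by linarith, by linarith, by linarith⟩

lemma ser_opt_decomp (h₁ : 𝒜₁.Nonempty) (h₂ : 𝒜₂.Nonempty) {m : ℕ} {x : α ⊕ β → ℕ}
    (hx : x ∈ Reach (Aser 𝒜₁ 𝒜₂) m) (hopt : Phi d x = Cm d (Aser 𝒜₁ 𝒜₂) m) :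
    x ∘ Sum.inl ∈ Reach 𝒜₁ m ∧ x ∘ Sum.inr ∈ Reach 𝒜₂ m ∧
      Phi (d ∘ Sum.inl) (x ∘ Sum.inl) = Cm (d ∘ Sum.inl) 𝒜₁ m ∧
      Phi (d ∘ Sum.inr) (x ∘ Sum.inr) = Cm (d ∘ Sum.inr) 𝒜₂ m := by
  obtain ⟨hxl, hxr⟩ := (reach_ser m x).1 hx
  have h1 := Cm_le (d := d ∘ Sum.inl) hxl
  have h2 := Cm_le (d := d ∘ Sum.inr) hxr
  have h3 := Cm_ser (d := d) h₁ h₂ m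
  have h4 : Phi d x = Phi (d ∘ Sum.inl) (x ∘ Sum.inl) + Phi (d ∘ Sum.inr) (x ∘ Sum.inr) :=
    Phi_sum d x
  exact ⟨hxl, hxr, by linarith, by linarith⟩

lemma Cm_par_ex (h₁ : 𝒜₁.Nonempty) (h₂ : 𝒜₂.Nonempty) (m : ℕ) :
    ∃ k, k ≤ m ∧ Cm d (Apar 𝒜₁ 𝒜₂) m = Cm (d ∘ Sum.inl) 𝒜₁ k + Cm (d ∘ Sum.inr) 𝒜₂ (m - k) := by
  obtain ⟨x, hx, hP⟩ := exists_Cm (d := d) (Apar_nonempty h₁) m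
  obtain ⟨k, hk, -, -, -, -, h⟩ := par_opt_decomp h₁ h₂ hx hP
  exact ⟨k, hk, h⟩

end SPAux
namespace SPAux
open Finset

variable {R : Type} [DecidableEq R] [Fintype R]

lemma reach_univ : ∀ (m : ℕ) (x : R → ℕ),
    x ∈ Reach ({Finset.univ} : Finset (Finset R)) m ↔ x = fun _ => m := by
  intro m
  induction m with
  | zero => intro x; simp [mem_reach_zero]
  | succ m ih =>
    intro x
    rw [mem_reach_succ]
    constructor
    · rintro ⟨u, hu, P, hP, rfl⟩
      rw [ih] at hu
      rw [Finset.mem_singleton] at hP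
      subst hu; subst hP
      funext r; simp [addP]
    · rintro rfl
      refine ⟨fun _ => m, (ih _).2 rfl, Finset.univ, Finset.mem_singleton_self _, ?_⟩
      funext r; simp [addP]

lemma Cm_univ (d : R → ℕ → ℝ) (m : ℕ) :
    Cm d ({Finset.univ} : Finset (Finset R)) m = Phi d (fun _ => m) := by
  unfold Cm
  have h : Phi d '' ((Reach ({Finset.univ} : Finset (Finset R)) m : Finset (R → ℕ)) : Set (R → ℕ))
      = {Phi d (fun _ => m)} := by
    ext z
    simp only [Set.mem_image, Set.mem_singleton_iff, Finset.mem_coe, reach_univ]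
    constructor
    · rintro ⟨u, rfl, rfl⟩; rfl
    · rintro rfl; exact ⟨_, rfl, rfl⟩
  rw [h, csInf_singleton]

lemma paths_nonempty : ∀ t : SPTree, t.paths.Nonempty
  | .edge => ⟨_, Finset.mem_singleton_self _⟩
  | .series t₁ t₂ => by
    obtain ⟨P₁, h₁⟩ := paths_nonempty t₁
    obtain ⟨P₂, h₂⟩ := paths_nonempty t₂
    exact ⟨_, Finset.mem_image.2 ⟨(P₁, P₂), Finset.mem_product.2 ⟨h₁, h₂⟩, rfl⟩⟩
  | .parallel t₁ t₂ => by
    obtain ⟨P₁, h₁⟩ := paths_nonempty t₁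
    exact ⟨_, Finset.mem_union_left _ (Finset.mem_image_of_mem _ h₁)⟩

end SPAux
namespace SPAux
open Finset

set_option maxHeartbeats 1000000 in
theorem tree_pkg (t : SPTree) :
    ∀ d : t.Arc → ℕ → ℝ, Mono d → Nneg d →
      (∀ m : ℕ, Cm d t.paths m ≤ Cm d t.paths (m+1)) ∧
      (∀ m : ℕ, Cm d t.paths (m+1) - Cm d t.paths m
          ≤ Cm d t.paths (m+2) - Cm d t.paths (m+1)) ∧
      (∀ m x, x ∈ Reach t.paths m → Phi d x = Cm d t.paths m →
        ∃ P ∈ t.paths, margc d x P ≤ Cm d t.paths (m+1) - Cm d t.paths m) ∧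
      (∀ m m' x y, x ∈ Reach t.paths m → Phi d x = Cm d t.paths m → y ∈ Reach t.paths m' →
        (m ≤ m' → Esum d x y ≤ -(((m' - m : ℕ) : ℝ)) * (Cm d t.paths (m+1) - Cm d t.paths m)) ∧
        (m' ≤ m → Esum d x y ≤ ((m - m' : ℕ) : ℝ) * (Cm d t.paths m - Cm d t.paths (m-1)))) := by
  induction t with
  | edge =>
    intro d hM hN
    have hsum : ∀ f : SPTree.Arc .edge → ℝ, ∑ r, f r = f () := by
      intro f
      refine Finset.sum_eq_single () (fun b _ hb => absurd rfl hb)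
        (fun h => absurd (Finset.mem_univ ()) h)
    have hCe : ∀ m, Cm d SPTree.edge.paths m = ∑ i ∈ Finset.Icc 1 m, d () i := by
      intro m
      have h1 : Cm d SPTree.edge.paths m = Phi d (fun _ => m) := Cm_univ d m
      rw [h1]
      unfold Phi
      exact hsum _
    have hstep : ∀ m, Cm d SPTree.edge.paths (m+1) = Cm d SPTree.edge.paths m + d () (m+1) := by
      intro m
      rw [hCe, hCe, Finset.sum_Icc_succ_top (by omega : 1 ≤ m + 1)]
    have hre : ∀ (m : ℕ) (x : SPTree.Arc .edge → ℕ),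
        x ∈ Reach SPTree.edge.paths m ↔ x = fun _ => m := reach_univ
    refine ⟨?_, ?_, ?_, ?_⟩
    · intro m; rw [hstep]; linarith [hN () (m+1)]
    · intro m
      have := hM () (by omega : m + 1 ≤ m + 2)
      have e1 := hstep m
      have e2 := hstep (m+1)
      linarith
    · intro m x hx hopt
      have hxe := (hre m x).1 hx
      refine ⟨Finset.univ, Finset.mem_singleton_self _, ?_⟩
      rw [hstep]
      have : margc d x Finset.univ = d () (m + 1) := by
        unfold margc
        rw [hsum (fun r => d r (x r + 1)), hxe]
      rw [this]
      linarith
    · intro m m' x y hx hopt hy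
      have hxe := (hre m x).1 hx
      have hye := (hre m' y).1 hy
      subst hxe; subst hye
      have hE : Esum d (fun _ => m) (fun _ => m')
          = ((m - m' : ℕ) : ℝ) * d () m - ((m' - m : ℕ) : ℝ) * d () (m+1) := by
        unfold Esum
        exact hsum _
      constructor
      · intro hmm
        rw [hE, hstep, Nat.sub_eq_zero_of_le hmm]
        push_cast
        ring_nf
        rfl
      · intro hmm
        rw [hE, Nat.sub_eq_zero_of_le hmm]
        rcases Nat.eq_zero_or_pos m with rfl | hm
        · have : m' = 0 := by omega
          subst this
          simp
        · have h2 : Cm d SPTree.edge.paths m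
              = Cm d SPTree.edge.paths (m - 1) + d () m := by
            have := hstep (m - 1)
            have e : m - 1 + 1 = m := by omega
            rw [e] at this
            exact this
          rw [h2]
          push_cast
          ring_nf
          rfl
  | series t₁ t₂ ih₁ ih₂ =>
    intro d hM hN
    obtain ⟨T11, T21, T31, T41⟩ := ih₁ (d ∘ Sum.inl) (fun a => hM (Sum.inl a)) (fun a => hN (Sum.inl a))
    obtain ⟨T12, T22, T32, T42⟩ := ih₂ (d ∘ Sum.inr) (fun a => hM (Sum.inr a)) (fun a => hN (Sum.inr a))
    have h₁ := paths_nonempty t₁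
    have h₂ := paths_nonempty t₂
    have hC : ∀ m, Cm d (SPTree.series t₁ t₂).paths m
        = Cm (d ∘ Sum.inl) t₁.paths m + Cm (d ∘ Sum.inr) t₂.paths m := fun m => Cm_ser h₁ h₂ m
    refine ⟨?_, ?_, ?_, ?_⟩
    · intro m; rw [hC, hC]; linarith [T11 m, T12 m]
    · intro m; rw [hC, hC, hC]; linarith [T21 m, T22 m]
    · intro m x hx hopt
      have hdec : x ∘ Sum.inl ∈ Reach t₁.paths m ∧ x ∘ Sum.inr ∈ Reach t₂.paths m ∧
          Phi (d ∘ Sum.inl) (x ∘ Sum.inl) = Cm (d ∘ Sum.inl) t₁.paths m ∧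
          Phi (d ∘ Sum.inr) (x ∘ Sum.inr) = Cm (d ∘ Sum.inr) t₂.paths m :=
        ser_opt_decomp h₁ h₂ hx hopt
      obtain ⟨hxl, hxr, ho₁, ho₂⟩ := hdec
      obtain ⟨P₁, hP₁, hb₁⟩ := T31 m _ hxl ho₁
      obtain ⟨P₂, hP₂, hb₂⟩ := T32 m _ hxr ho₂
      refine ⟨P₁.image Sum.inl ∪ P₂.image Sum.inr,
        Finset.mem_image.2 ⟨(P₁, P₂), Finset.mem_product.2 ⟨hP₁, hP₂⟩, rfl⟩, ?_⟩
      have hmc : margc d x (P₁.image Sum.inl ∪ P₂.image Sum.inr)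
          = margc (d ∘ Sum.inl) (x ∘ Sum.inl) P₁ + margc (d ∘ Sum.inr) (x ∘ Sum.inr) P₂ :=
        margc_union d x P₁ P₂
      rw [hmc, hC, hC]
      linarith
    · intro m m' x y hx hopt hy
      have hdec : x ∘ Sum.inl ∈ Reach t₁.paths m ∧ x ∘ Sum.inr ∈ Reach t₂.paths m ∧
          Phi (d ∘ Sum.inl) (x ∘ Sum.inl) = Cm (d ∘ Sum.inl) t₁.paths m ∧
          Phi (d ∘ Sum.inr) (x ∘ Sum.inr) = Cm (d ∘ Sum.inr) t₂.paths m :=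
        ser_opt_decomp h₁ h₂ hx hopt
      obtain ⟨hxl, hxr, ho₁, ho₂⟩ := hdec
      have hydec : y ∘ Sum.inl ∈ Reach t₁.paths m' ∧ y ∘ Sum.inr ∈ Reach t₂.paths m' :=
        (reach_ser m' y).1 hy
      obtain ⟨hyl, hyr⟩ := hydec
      have hE : Esum d x y = Esum (d ∘ Sum.inl) (x ∘ Sum.inl) (y ∘ Sum.inl)
          + Esum (d ∘ Sum.inr) (x ∘ Sum.inr) (y ∘ Sum.inr) := Esum_sum d x y
      have hT1 := T41 m m' _ _ hxl ho₁ hyl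
      have hT2 := T42 m m' _ _ hxr ho₂ hyr
      constructor
      · intro hmm
        rw [hE, hC, hC]
        have b1 := hT1.1 hmm
        have b2 := hT2.1 hmm
        linarith [b1, b2]
      · intro hmm
        rw [hE, hC, hC]
        have b1 := hT1.2 hmm
        have b2 := hT2.2 hmm
        linarith [b1, b2]
  | parallel t₁ t₂ ih₁ ih₂ =>
    intro d hM hN
    obtain ⟨T11, T21, T31, T41⟩ := ih₁ (d ∘ Sum.inl) (fun a => hM (Sum.inl a)) (fun a => hN (Sum.inl a))
    obtain ⟨T12, T22, T32, T42⟩ := ih₂ (d ∘ Sum.inr) (fun a => hM (Sum.inr a)) (fun a => hN (Sum.inr a))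
    have h₁ := paths_nonempty t₁
    have h₂ := paths_nonempty t₂
    have hd1 := delta_mono T21
    have hd2 := delta_mono T22
    have hCle : ∀ k m : ℕ, k ≤ m → Cm d (SPTree.parallel t₁ t₂).paths m
        ≤ Cm (d ∘ Sum.inl) t₁.paths k + Cm (d ∘ Sum.inr) t₂.paths (m - k) :=
      fun k m hk => Cm_par_le h₁ h₂ hk
    have hCex : ∀ m : ℕ, ∃ k, k ≤ m ∧ Cm d (SPTree.parallel t₁ t₂).paths m
        = Cm (d ∘ Sum.inl) t₁.paths k + Cm (d ∘ Sum.inr) t₂.paths (m - k) :=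
      fun m => Cm_par_ex h₁ h₂ m
    -- T1 (monotonicity of the composite optimum)
    have hT1 : ∀ m : ℕ, Cm d (SPTree.parallel t₁ t₂).paths m
        ≤ Cm d (SPTree.parallel t₁ t₂).paths (m+1) := by
      intro m
      obtain ⟨j, hj, hCj⟩ := hCex (m+1)
      rcases Nat.lt_or_ge j (m+1) with hlt | hge
      · have h1 := hCle j m (by omega)
        have e : m + 1 - j = (m - j) + 1 := by omega
        rw [e] at hCj
        have h2 := T12 (m - j)
        linarith
      · have hj' : j = m + 1 := by omega
        subst hj'
        have h1 := hCle m m le_rfl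
        have h2 := T11 m
        have e : m - m = 0 := by omega
        have e' : m + 1 - (m+1) = 0 := by omega
        rw [e] at h1
        rw [e'] at hCj
        linarith
    refine ⟨hT1, ?_, ?_, ?_⟩
    -- T2 (convexity)
    · intro m
      obtain ⟨k, hk, hCk⟩ := hCex (m+2)
      obtain ⟨l, hl, hCl⟩ := hCex m
      rcases le_or_gt k l with hkl | hkl
      · have s1 := hCle k (m+1) (by omega)
        have s2 := hCle l (m+1) (by omega)
        have hdd := hd2 (m - l) (m + 1 - k) (by omega)
        have e1 : m + 1 - l = (m - l) + 1 := by omega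
        have e2 : m + 2 - k = (m + 1 - k) + 1 := by omega
        rw [e1] at s2
        rw [e2] at hCk
        linarith
      · have s1raw := hCle (k-1) (m+1) (by omega)
        have e1 : m + 1 - (k - 1) = m + 2 - k := by omega
        rw [e1] at s1raw
        have s2 := hCle (l+1) (m+1) (by omega)
        have e2 : m + 1 - (l + 1) = m - l := by omega
        rw [e2] at s2
        have hdd := hd1 l (k-1) (by omega)
        have e3 : k - 1 + 1 = k := by omega
        rw [e3] at hdd
        linarith
    -- T3 (greedy step from an optimum)
    · intro m x hx hopt
      have hdec : ∃ k, k ≤ m ∧ x ∘ Sum.inl ∈ Reach t₁.paths k ∧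
          x ∘ Sum.inr ∈ Reach t₂.paths (m - k) ∧
          Phi (d ∘ Sum.inl) (x ∘ Sum.inl) = Cm (d ∘ Sum.inl) t₁.paths k ∧
          Phi (d ∘ Sum.inr) (x ∘ Sum.inr) = Cm (d ∘ Sum.inr) t₂.paths (m - k) ∧
          Cm d (SPTree.parallel t₁ t₂).paths m
            = Cm (d ∘ Sum.inl) t₁.paths k + Cm (d ∘ Sum.inr) t₂.paths (m - k) :=
        par_opt_decomp h₁ h₂ hx hopt
      obtain ⟨k, hk, hxl, hxr, ho₁, ho₂, hCm⟩ := hdec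
      obtain ⟨P₁, hP₁, hb₁⟩ := T31 k _ hxl ho₁
      obtain ⟨P₂, hP₂, hb₂⟩ := T32 (m - k) _ hxr ho₂
      obtain ⟨j, hj, hCj⟩ := hCex (m+1)
      have hmin : min (Cm (d ∘ Sum.inl) t₁.paths (k+1) - Cm (d ∘ Sum.inl) t₁.paths k)
          (Cm (d ∘ Sum.inr) t₂.paths ((m-k)+1) - Cm (d ∘ Sum.inr) t₂.paths (m-k))
          ≤ Cm d (SPTree.parallel t₁ t₂).paths (m+1) - Cm d (SPTree.parallel t₁ t₂).paths m := by
        rcases le_or_gt j k with hjk | hjk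
        · have s := hCle j m (by omega)
          have hdd := hd2 (m - k) (m - j) (by omega)
          have e : m + 1 - j = (m - j) + 1 := by omega
          rw [e] at hCj
          have := min_le_right (Cm (d ∘ Sum.inl) t₁.paths (k+1) - Cm (d ∘ Sum.inl) t₁.paths k)
            (Cm (d ∘ Sum.inr) t₂.paths ((m-k)+1) - Cm (d ∘ Sum.inr) t₂.paths (m-k))
          linarith
        · have s := hCle (j-1) m (by omega)
          have e : m - (j - 1) = m + 1 - j := by omega
          rw [e] at s
          have hdd := hd1 k (j-1) (by omega)
          have e2 : j - 1 + 1 = j := by omega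
          rw [e2] at hdd
          have := min_le_left (Cm (d ∘ Sum.inl) t₁.paths (k+1) - Cm (d ∘ Sum.inl) t₁.paths k)
            (Cm (d ∘ Sum.inr) t₂.paths ((m-k)+1) - Cm (d ∘ Sum.inr) t₂.paths (m-k))
          linarith
      rcases le_total (Cm (d ∘ Sum.inl) t₁.paths (k+1) - Cm (d ∘ Sum.inl) t₁.paths k)
          (Cm (d ∘ Sum.inr) t₂.paths ((m-k)+1) - Cm (d ∘ Sum.inr) t₂.paths (m-k)) with hΔ | hΔ
      · refine ⟨P₁.image Sum.inl, Finset.mem_union_left _ (Finset.mem_image_of_mem _ hP₁), ?_⟩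
        have hmc : margc d x (P₁.image Sum.inl) = margc (d ∘ Sum.inl) (x ∘ Sum.inl) P₁ :=
          margc_image_inl d x P₁
        rw [hmc]
        rw [min_eq_left hΔ] at hmin
        linarith
      · refine ⟨P₂.image Sum.inr, Finset.mem_union_right _ (Finset.mem_image_of_mem _ hP₂), ?_⟩
        have hmc : margc d x (P₂.image Sum.inr) = margc (d ∘ Sum.inr) (x ∘ Sum.inr) P₂ :=
          margc_image_inr d x P₂
        rw [hmc]
        rw [min_eq_right hΔ] at hmin
        linarith
    -- T4 (the exchange inequality)
    · intro m m' x y hx hopt hy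
      have hdec : ∃ k, k ≤ m ∧ x ∘ Sum.inl ∈ Reach t₁.paths k ∧
          x ∘ Sum.inr ∈ Reach t₂.paths (m - k) ∧
          Phi (d ∘ Sum.inl) (x ∘ Sum.inl) = Cm (d ∘ Sum.inl) t₁.paths k ∧
          Phi (d ∘ Sum.inr) (x ∘ Sum.inr) = Cm (d ∘ Sum.inr) t₂.paths (m - k) ∧
          Cm d (SPTree.parallel t₁ t₂).paths m
            = Cm (d ∘ Sum.inl) t₁.paths k + Cm (d ∘ Sum.inr) t₂.paths (m - k) :=
        par_opt_decomp h₁ h₂ hx hopt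
      obtain ⟨k, hk, hxl, hxr, ho₁, ho₂, hCm⟩ := hdec
      have hydec : ∃ l, l ≤ m' ∧ y ∘ Sum.inl ∈ Reach t₁.paths l ∧
          y ∘ Sum.inr ∈ Reach t₂.paths (m' - l) := (reach_par m' y).1 hy
      obtain ⟨l, hl, hyl, hyr⟩ := hydec
      have hT4₁ := T41 k l _ _ hxl ho₁ hyl
      have hT4₂ := T42 (m - k) (m' - l) _ _ hxr ho₂ hyr
      have hE : Esum d x y = Esum (d ∘ Sum.inl) (x ∘ Sum.inl) (y ∘ Sum.inl)
          + Esum (d ∘ Sum.inr) (x ∘ Sum.inr) (y ∘ Sum.inr) := Esum_sum d x y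
      -- abbreviations for the four relevant deltas
      set D1 := Cm (d ∘ Sum.inl) t₁.paths (k+1) - Cm (d ∘ Sum.inl) t₁.paths k with hD1
      set D1' := Cm (d ∘ Sum.inl) t₁.paths k - Cm (d ∘ Sum.inl) t₁.paths (k-1) with hD1'
      set D2 := Cm (d ∘ Sum.inr) t₂.paths ((m-k)+1) - Cm (d ∘ Sum.inr) t₂.paths (m-k) with hD2
      set D2' := Cm (d ∘ Sum.inr) t₂.paths (m-k) - Cm (d ∘ Sum.inr) t₂.paths ((m-k)-1) with hD2'
      set Dc := Cm d (SPTree.parallel t₁ t₂).paths (m+1) - Cm d (SPTree.parallel t₁ t₂).paths m with hDc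
      set Dc' := Cm d (SPTree.parallel t₁ t₂).paths m - Cm d (SPTree.parallel t₁ t₂).paths (m-1) with hDc'
      have dm1_1 : Dc ≤ D1 := by
        have h := hCle (k+1) (m+1) (by omega)
        have e : m + 1 - (k+1) = m - k := by omega
        rw [e] at h
        rw [hD1, hDc]
        linarith
      have dm1_2 : Dc ≤ D2 := by
        have h := hCle k (m+1) (by omega)
        have e : m + 1 - k = (m - k) + 1 := by omega
        rw [e] at h
        rw [hD2, hDc]
        linarith
      have dm_1 : D1' ≤ Dc' := by
        rcases Nat.eq_zero_or_pos k with rfl | hkpos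
        · rw [hD1', hDc']
          simp only [Nat.zero_sub, Nat.sub_zero, sub_self]
          rcases Nat.eq_zero_or_pos m with rfl | hmpos
          · simp
          · have := hT1 (m-1)
            have e : m - 1 + 1 = m := by omega
            rw [e] at this
            linarith
        · have h := hCle (k-1) (m-1) (by omega)
          have e : m - 1 - (k - 1) = m - k := by omega
          rw [e] at h
          rw [hD1', hDc']
          linarith
      have dm_2 : D2' ≤ Dc' := by
        rcases Nat.eq_zero_or_pos (m - k) with hz | hpos
        · rw [hD2', hDc', hz]
          simp only [Nat.zero_sub, Nat.sub_zero, sub_self]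
          rcases Nat.eq_zero_or_pos m with rfl | hmpos
          · simp
          · have := hT1 (m-1)
            have e : m - 1 + 1 = m := by omega
            rw [e] at this
            linarith
        · have h := hCle k (m-1) (by omega)
          have e : m - 1 - k = (m - k) - 1 := by omega
          rw [e] at h
          rw [hD2', hDc']
          linarith
      have cross1 : D1' ≤ D2 := by
        rcases Nat.eq_zero_or_pos k with rfl | hkpos
        · rw [hD1', hD2]
          simp only [Nat.zero_sub, sub_self]
          linarith [T12 (m - 0)]
        · have h := hCle (k-1) m (by omega)
          have e : m - (k - 1) = (m - k) + 1 := by omega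
          rw [e] at h
          rw [hD1', hD2]
          linarith
      have cross2 : D2' ≤ D1 := by
        rcases Nat.eq_zero_or_pos (m - k) with hz | hpos
        · rw [hD2', hD1, hz]
          simp only [Nat.zero_sub, Nat.sub_zero, sub_self]
          linarith [T11 k]
        · have h := hCle (k+1) m (by omega)
          have e : m - (k+1) = (m - k) - 1 := by omega
          rw [e] at h
          rw [hD2', hD1]
          linarith
      constructor
      · -- m ≤ m'
        intro hmm
        rw [hE]
        by_cases hc1 : l < k
        · have hE₁ := hT4₁.2 (by omega : l ≤ k)
          have hE₂ := hT4₂.1 (by omega : m - k ≤ m' - l)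
          have ecast : (((m' - l) - (m - k) : ℕ) : ℝ)
              = ((m' - m : ℕ) : ℝ) + ((k - l : ℕ) : ℝ) := by
            have e : (m' - l) - (m - k) = (m' - m) + (k - l) := by omega
            rw [e]; push_cast; ring
          have p1 : ((k - l : ℕ) : ℝ) * D1' ≤ ((k - l : ℕ) : ℝ) * D2 :=
            mul_le_mul_of_nonneg_left cross1 (Nat.cast_nonneg _)
          have p2 : ((m' - m : ℕ) : ℝ) * Dc ≤ ((m' - m : ℕ) : ℝ) * D2 :=
            mul_le_mul_of_nonneg_left dm1_2 (Nat.cast_nonneg _)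
          rw [ecast] at hE₂
          linarith [hE₁, hE₂, p1, p2]
        · by_cases hc2 : m' - l < m - k
          · have hlk : k < l := by omega
            have hE₁ := hT4₁.1 (by omega : k ≤ l)
            have hE₂ := hT4₂.2 (by omega : m' - l ≤ m - k)
            have ecast : (((l - k) : ℕ) : ℝ)
                = ((m' - m : ℕ) : ℝ) + (((m - k) - (m' - l) : ℕ) : ℝ) := by
              have e : l - k = (m' - m) + ((m - k) - (m' - l)) := by omega
              rw [e]; push_cast; ring
            have p1 : (((m - k) - (m' - l) : ℕ) : ℝ) * D2' ≤ (((m - k) - (m' - l) : ℕ) : ℝ) * D1 :=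
              mul_le_mul_of_nonneg_left cross2 (Nat.cast_nonneg _)
            have p2 : ((m' - m : ℕ) : ℝ) * Dc ≤ ((m' - m : ℕ) : ℝ) * D1 :=
              mul_le_mul_of_nonneg_left dm1_1 (Nat.cast_nonneg _)
            rw [ecast] at hE₁
            linarith [hE₁, hE₂, p1, p2]
          · have hE₁ := hT4₁.1 (by omega : k ≤ l)
            have hE₂ := hT4₂.1 (by omega : m - k ≤ m' - l)
            have ecast : ((l - k : ℕ) : ℝ) + (((m' - l) - (m - k) : ℕ) : ℝ)
                = ((m' - m : ℕ) : ℝ) := by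
              have e : (l - k) + ((m' - l) - (m - k)) = m' - m := by omega
              rw [← e]; push_cast; ring
            have p1 : ((l - k : ℕ) : ℝ) * Dc ≤ ((l - k : ℕ) : ℝ) * D1 :=
              mul_le_mul_of_nonneg_left dm1_1 (Nat.cast_nonneg _)
            have p2 : (((m' - l) - (m - k) : ℕ) : ℝ) * Dc ≤ (((m' - l) - (m - k) : ℕ) : ℝ) * D2 :=
              mul_le_mul_of_nonneg_left dm1_2 (Nat.cast_nonneg _)
            have q : (((l - k : ℕ) : ℝ) + (((m' - l) - (m - k) : ℕ) : ℝ)) * Dc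
                = ((m' - m : ℕ) : ℝ) * Dc := by rw [ecast]
            linarith [hE₁, hE₂, p1, p2, q]
      · -- m' ≤ m
        intro hmm
        rw [hE]
        by_cases hc1 : k < l
        · have hE₁ := hT4₁.1 (by omega : k ≤ l)
          have hE₂ := hT4₂.2 (by omega : m' - l ≤ m - k)
          have ecast : (((m - k) - (m' - l) : ℕ) : ℝ)
              = ((m - m' : ℕ) : ℝ) + ((l - k : ℕ) : ℝ) := by
            have e : (m - k) - (m' - l) = (m - m') + (l - k) := by omega
            rw [e]; push_cast; ring
          have p1 : ((l - k : ℕ) : ℝ) * D2' ≤ ((l - k : ℕ) : ℝ) * D1 :=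
            mul_le_mul_of_nonneg_left cross2 (Nat.cast_nonneg _)
          have p2 : ((m - m' : ℕ) : ℝ) * D2' ≤ ((m - m' : ℕ) : ℝ) * Dc' :=
            mul_le_mul_of_nonneg_left dm_2 (Nat.cast_nonneg _)
          rw [ecast] at hE₂
          linarith [hE₁, hE₂, p1, p2]
        · by_cases hc2 : m - k < m' - l
          · have hlk : l < k := by omega
            have hE₁ := hT4₁.2 (by omega : l ≤ k)
            have hE₂ := hT4₂.1 (by omega : m - k ≤ m' - l)
            have ecast : ((k - l : ℕ) : ℝ)
                = ((m - m' : ℕ) : ℝ) + (((m' - l) - (m - k) : ℕ) : ℝ) := by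
              have e : k - l = (m - m') + ((m' - l) - (m - k)) := by omega
              rw [e]; push_cast; ring
            have p1 : (((m' - l) - (m - k) : ℕ) : ℝ) * D1' ≤ (((m' - l) - (m - k) : ℕ) : ℝ) * D2 :=
              mul_le_mul_of_nonneg_left cross1 (Nat.cast_nonneg _)
            have p2 : ((m - m' : ℕ) : ℝ) * D1' ≤ ((m - m' : ℕ) : ℝ) * Dc' :=
              mul_le_mul_of_nonneg_left dm_1 (Nat.cast_nonneg _)
            rw [ecast] at hE₁
            linarith [hE₁, hE₂, p1, p2]
          · have hE₁ := hT4₁.2 (by omega : l ≤ k)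
            have hE₂ := hT4₂.2 (by omega : m' - l ≤ m - k)
            have ecast : ((k - l : ℕ) : ℝ) + (((m - k) - (m' - l) : ℕ) : ℝ)
                = ((m - m' : ℕ) : ℝ) := by
              have e : (k - l) + ((m - k) - (m' - l)) = m - m' := by omega
              rw [← e]; push_cast; ring
            have p1 : ((k - l : ℕ) : ℝ) * D1' ≤ ((k - l : ℕ) : ℝ) * Dc' :=
              mul_le_mul_of_nonneg_left dm_1 (Nat.cast_nonneg _)
            have p2 : (((m - k) - (m' - l) : ℕ) : ℝ) * D2' ≤ (((m - k) - (m' - l) : ℕ) : ℝ) * Dc' :=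
              mul_le_mul_of_nonneg_left dm_2 (Nat.cast_nonneg _)
            have q : (((k - l : ℕ) : ℝ) + (((m - k) - (m' - l) : ℕ) : ℝ)) * Dc'
                = ((m - m' : ℕ) : ℝ) * Dc' := by rw [ecast]
            linarith [hE₁, hE₂, p1, p2, q]

end SPAux
namespace SPAux
open Finset

variable {R : Type} [DecidableEq R] [Fintype R]

lemma Cm_zero (d : R → ℕ → ℝ) (𝒜 : Finset (Finset R)) :
    Cm d 𝒜 0 = Phi d (fun _ => 0) := by
  unfold Cm
  have h : Phi d '' ((Reach 𝒜 0 : Finset (R → ℕ)) : Set (R → ℕ)) = {Phi d (fun _ => 0)} := by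
    ext z
    simp only [Set.mem_image, Set.mem_singleton_iff, Finset.mem_coe, mem_reach_zero]
    constructor
    · rintro ⟨u, rfl, rfl⟩; rfl
    · rintro rfl; exact ⟨_, rfl, rfl⟩
  rw [h, csInf_singleton]

def cb {n : ℕ} (A : Fin n → Finset R) (i : ℕ) : R → ℕ :=
  fun r => ∑ j : Fin n, if (j : ℕ) < i ∧ r ∈ A j then 1 else 0

lemma cb_zero {n : ℕ} (A : Fin n → Finset R) : cb A 0 = fun _ => 0 := by
  funext r; simp [cb]

lemma cb_succ_tail {n : ℕ} (A : Fin (n+1) → Finset R) (i : ℕ) :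
    cb A (i+1) = fun r => (if r ∈ A 0 then 1 else 0) + cb (Fin.tail A) i r := by
  funext r
  unfold cb
  rw [Fin.sum_univ_succ]
  congr 1
  · simp
  · refine Finset.sum_congr rfl fun j _ => ?_
    simp only [Fin.val_succ, Nat.add_lt_add_iff_right, Fin.tail]
    exact if_congr Iff.rfl rfl rfl

lemma cb_at {n : ℕ} (A : Fin n → Finset R) (i : ℕ) (h : i < n) :
    cb A (i+1) = addP (cb A i) (A ⟨i, h⟩) := by
  funext r
  unfold cb addP
  have key : ∀ j : Fin n, (if (j : ℕ) < i + 1 ∧ r ∈ A j then (1:ℕ) else 0)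
      = (if (j : ℕ) < i ∧ r ∈ A j then 1 else 0) + (if j = ⟨i, h⟩ ∧ r ∈ A j then 1 else 0) := by
    intro j
    have hval : (j = (⟨i, h⟩ : Fin n)) ↔ ((j : ℕ) = i) := Fin.ext_iff
    by_cases h2 : r ∈ A j
    · simp only [h2, and_true, hval]
      split_ifs <;> omega
    · simp [h2]
  rw [Finset.sum_congr rfl (fun j _ => key j), Finset.sum_add_distrib]
  congr 1
  have e : ∀ j : Fin n, (if j = (⟨i, h⟩ : Fin n) ∧ r ∈ A j then (1:ℕ) else 0)
      = if j = (⟨i, h⟩ : Fin n) then (if r ∈ A ⟨i, h⟩ then 1 else 0) else 0 := by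
    intro j
    by_cases hj : j = (⟨i, h⟩ : Fin n)
    · subst hj; simp
    · simp [hj]
  rw [Finset.sum_congr rfl (fun j _ => e j), Finset.sum_ite_eq' Finset.univ]
  simp

lemma cb_full {n : ℕ} (G : CGame R n) (A : Fin n → Finset R) (r : R) :
    G.congestion A r = cb A n r := by
  unfold CGame.congestion cb
  rw [Finset.card_filter]
  exact Finset.sum_congr rfl fun j _ => by simp [j.isLt]

lemma cb_comp {n : ℕ} (A : Fin n → Finset R) (σ : Equiv.Perm (Fin n)) :
    cb (A ∘ σ) n = cb A n := by
  funext r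
  unfold cb
  have h1 : ∀ B : Fin n → Finset R,
      (∑ j : Fin n, if (j : ℕ) < n ∧ r ∈ B j then (1:ℕ) else 0)
        = ∑ j : Fin n, if r ∈ B j then 1 else 0 :=
    fun B => Finset.sum_congr rfl fun j _ => by simp [j.isLt]
  rw [h1, h1]
  exact Equiv.sum_comp σ (fun j => if r ∈ A j then 1 else 0)

def GreedyOn (d : R → ℕ → ℝ) (𝒜 : Finset (Finset R)) (x₀ : R → ℕ) {n : ℕ}
    (A : Fin n → Finset R) : Prop :=
  ∀ i : Fin n, A i ∈ 𝒜 ∧ ∀ Q ∈ 𝒜,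
    margc d (fun r => x₀ r + cb A (i : ℕ) r) (A i) ≤ margc d (fun r => x₀ r + cb A (i : ℕ) r) Q

end SPAux

section GameExtract
open SPAux Finset

variable {R : Type} [DecidableEq R] [Fintype R]

def shifted (t : SPTree) (d : t.Arc → ℕ → ℝ) (n : ℕ) (x₀ : t.Arc → ℕ) : CGame t.Arc n :=
  ⟨fun _ => t.paths, fun r y => d r (y + x₀ r)⟩

lemma subgame_shifted (t : SPTree) (d : t.Arc → ℕ → ℝ) (n : ℕ) (x₀ : t.Arc → ℕ)
    (a : Finset t.Arc) :
    (shifted t d (n+1) x₀).subgame a = shifted t d n (addP x₀ a) := by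
  unfold shifted CGame.subgame
  congr 1
  funext r y
  simp only [addP]
  congr 1
  omega

lemma cost_one (G1 : CGame R 1) (a : Finset R) (g : Fin 0 → Finset R) :
    G1.cost (Fin.cons a g) 0 = ∑ r ∈ a, G1.delay r 1 := by
  unfold CGame.cost CGame.congestion
  rw [Fin.cons_zero]
  refine Finset.sum_congr rfl fun r hr => ?_
  congr 1
  have h1 : (Finset.univ.filter fun i : Fin 1 => r ∈ (Fin.cons a g : Fin 1 → Finset R) i)
      = Finset.univ := by
    refine Finset.filter_true_of_mem fun i _ => ?_
    have h2 : i = 0 := Subsingleton.elim i 0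
    rw [h2, Fin.cons_zero]; exact hr
  rw [h1]; simp

lemma spo_one {m : ℕ} (hm : m = 1) (G1 : CGame R m) (B : Fin m → Finset R)
    (h : CGame.IsSPO G1 B) (i : Fin m) :
    B i ∈ G1.actions i ∧ ∀ a ∈ G1.actions i,
      (∑ r ∈ B i, G1.delay r 1) ≤ ∑ r ∈ a, G1.delay r 1 := by
  subst hm
  have hi : i = 0 := Subsingleton.elim i 0
  subst hi
  rw [CGame.IsSPO] at h
  obtain ⟨hmem, f, -, hf, hmin⟩ := h
  refine ⟨hmem, fun a ha => ?_⟩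
  have := hmin a ha
  rw [cost_one, cost_one] at this
  exact this

theorem extract (t : SPTree) (d : t.Arc → ℕ → ℝ) :
    ∀ (n : ℕ) (x₀ : t.Arc → ℕ) (A : Fin n → Finset t.Arc),
      CGame.IsKLA 1 (shifted t d n x₀) A → GreedyOn d t.paths x₀ A := by
  intro n
  induction n with
  | zero => intro x₀ A _ i; exact i.elim0
  | succ n ih =>
    intro x₀ A hA
    rw [CGame.IsKLA] at hA
    obtain ⟨⟨hk, B, hSPO, hB0⟩, htail⟩ := hA
    have hhead := spo_one (by omega : min 1 (n+1) = 1) _ B hSPO ⟨0, hk⟩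
    rw [hB0] at hhead
    have hmem : A 0 ∈ t.paths := hhead.1
    have hmin : ∀ Q ∈ t.paths, margc d x₀ (A 0) ≤ margc d x₀ Q := by
      intro Q hQ
      have hle := hhead.2 Q hQ
      have e : ∀ P : Finset t.Arc,
          (∑ r ∈ P, ((shifted t d (n+1) x₀).truncate 1).delay r 1) = margc d x₀ P := by
        intro P
        refine Finset.sum_congr rfl fun r _ => ?_
        show d r (1 + x₀ r) = d r (x₀ r + 1)
        rw [Nat.add_comm]
      rw [e, e] at hle
      exact hle
    have htail' : CGame.IsKLA 1 (shifted t d n (addP x₀ (A 0))) (Fin.tail A) := by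
      rw [← subgame_shifted]
      exact htail
    have hG := ih (addP x₀ (A 0)) (Fin.tail A) htail'
    intro i
    refine Fin.cases ?_ ?_ i
    · refine ⟨hmem, fun Q hQ => ?_⟩
      have e : (fun r => x₀ r + cb A (((0 : Fin (n+1))) : ℕ) r) = x₀ := by
        funext r
        rw [show (((0 : Fin (n+1))) : ℕ) = 0 from rfl, cb_zero]
        simp
      rw [e]
      exact hmin Q hQ
    · intro j
      obtain ⟨hj1, hj2⟩ := hG j
      have ecb : (fun r => x₀ r + cb A ((j.succ : Fin (n+1)) : ℕ) r)
          = fun r => addP x₀ (A 0) r + cb (Fin.tail A) (j : ℕ) r := by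
        funext r
        rw [show ((j.succ : Fin (n+1)) : ℕ) = (j : ℕ) + 1 from rfl]
        rw [congrFun (cb_succ_tail A (j : ℕ)) r]
        simp only [addP]
        ring
      refine ⟨hj1, fun Q hQ => ?_⟩
      rw [ecb]
      exact hj2 Q hQ

theorem greedy_opt (t : SPTree) (d : t.Arc → ℕ → ℝ) (hM : Mono d) (hN : Nneg d)
    {n : ℕ} (A : Fin n → Finset t.Arc) (hG : GreedyOn d t.paths (fun _ => 0) A) :
    ∀ i, i ≤ n → cb A i ∈ Reach t.paths i ∧ Phi d (cb A i) = Cm d t.paths i := by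
  have T3 := (tree_pkg t d hM hN).2.2.1
  intro i
  induction i with
  | zero =>
    intro _
    rw [cb_zero]
    exact ⟨mem_reach_zero.2 rfl, (Cm_zero d t.paths).symm⟩
  | succ i ihi =>
    intro hle
    obtain ⟨hmem, hopt⟩ := ihi (by omega)
    have hil : i < n := by omega
    obtain ⟨hAi, hAmin⟩ := hG ⟨i, hil⟩
    obtain ⟨P, hP, hPb⟩ := T3 i (cb A i) hmem hopt
    have hmin' : margc d (cb A i) (A ⟨i, hil⟩) ≤ margc d (cb A i) P := by
      have h := hAmin P hP
      have e : (fun r => (fun _ => (0:ℕ)) r + cb A (((⟨i, hil⟩ : Fin n)) : ℕ) r) = cb A i := by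
        funext r; simp
      rw [e] at h
      exact h
    have hstep : cb A (i+1) = addP (cb A i) (A ⟨i, hil⟩) := cb_at A i hil
    have hmem' : cb A (i+1) ∈ Reach t.paths (i+1) := by
      rw [hstep]; exact mem_reach_succ.2 ⟨_, hmem, _, hAi, rfl⟩
    refine ⟨hmem', ?_⟩
    have hge := Cm_le (d := d) hmem'
    rw [hstep, Phi_addP] at hge ⊢
    linarith [hPb, hmin', hopt, hge]

theorem outcome_reach {𝒜 : Finset (Finset R)} {n : ℕ} (B : Fin n → Finset R)
    (hB : ∀ j, B j ∈ 𝒜) : ∀ i, i ≤ n → cb B i ∈ Reach 𝒜 i := by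
  intro i
  induction i with
  | zero => intro _; rw [cb_zero]; exact mem_reach_zero.2 rfl
  | succ i ih =>
    intro h
    rw [cb_at B i (by omega)]
    exact mem_reach_succ.2 ⟨_, ih (by omega), _, hB _, rfl⟩

lemma SC_formula (t : SPTree) (d : t.Arc → ℕ → ℝ) (n : ℕ) (A : Fin n → Finset t.Arc) :
    CGame.SC (SNCGsp t d n) A = ∑ r, (cb A n r : ℝ) * d r (cb A n r) := by
  unfold CGame.SC CGame.cost
  have h1 : ∀ i : Fin n, (∑ r ∈ A i, (SNCGsp t d n).delay r ((SNCGsp t d n).congestion A r))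
      = ∑ r, (if r ∈ A i then d r (cb A n r) else 0) := by
    intro i
    rw [Finset.sum_ite_mem, Finset.univ_inter]
    exact Finset.sum_congr rfl fun r _ => by rw [cb_full]; rfl
  rw [Finset.sum_congr rfl (fun i _ => h1 i), Finset.sum_comm]
  refine Finset.sum_congr rfl fun r _ => ?_
  have h2 : cb A n r = ∑ i : Fin n, (if r ∈ A i then (1:ℕ) else 0) := by
    unfold cb
    exact Finset.sum_congr rfl fun i _ => by simp [i.isLt]
  rw [h2]
  push_cast
  rw [Finset.sum_mul]
  exact Finset.sum_congr rfl fun i _ => by split_ifs <;> ring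

lemma SC_perm (t : SPTree) (d : t.Arc → ℕ → ℝ) (n : ℕ) (A : Fin n → Finset t.Arc)
    (σ : Equiv.Perm (Fin n)) :
    CGame.SC (SNCGsp t d n) (A ∘ σ) = CGame.SC (SNCGsp t d n) A := by
  rw [SC_formula, SC_formula, cb_comp]

lemma cast_sub_sub (x y : ℕ) : ((x - y : ℕ) : ℝ) - ((y - x : ℕ) : ℝ) = (x : ℝ) - y := by
  rcases le_total x y with h | h
  · rw [Nat.sub_eq_zero_of_le h, Nat.cast_sub h]
    push_cast; ring
  · rw [Nat.sub_eq_zero_of_le h, Nat.cast_sub h]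
    push_cast; ring

lemma num_ineq (a b : ℝ) (ha : 0 ≤ a) (hb : 0 ≤ b) (x y : ℕ) :
    (y : ℝ) * (a * x + b) + ((y - x : ℕ) : ℝ) * a
      ≤ a * (y:ℝ)^2 + a * (x:ℝ)^2 / 4 + b * y := by
  rcases le_or_gt y x with h | h
  · rw [Nat.sub_eq_zero_of_le h]
    nlinarith [mul_nonneg ha (sq_nonneg ((x:ℝ)/2 - (y:ℝ)))]
  · rw [Nat.cast_sub h.le]
    have hxy : (x:ℝ) + 1 ≤ (y:ℝ) := by exact_mod_cast h
    have h0 : (0:ℝ) ≤ x := Nat.cast_nonneg x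
    have h0y : (0:ℝ) ≤ y := Nat.cast_nonneg y
    nlinarith [mul_nonneg ha (mul_nonneg h0y (by linarith : (0:ℝ) ≤ (y:ℝ) - x - 1)),
      mul_nonneg ha h0, mul_nonneg ha (sq_nonneg (x:ℝ))]

end GameExtract
/-- For an SNCG on a series-parallel graph with affine delay functions
`d_r(x) = a_r·x + b_r` (`a_r, b_r ≥ 0`), every 1-lookahead outcome `A` satisfies
`SC(A) ≤ (4/3)·SC(B)` for every outcome `B`. -/
theorem sp_affine_one_lookahead_four_thirds (t : SPTree)
    (a b : t.Arc → ℝ) (ha : ∀ r, 0 ≤ a r) (hb : ∀ r, 0 ≤ b r) (n : ℕ)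
    (A : Fin n → Finset t.Arc)
    (hA : CGame.IsKLO 1 (SNCGsp t (fun r x => a r * (x : ℝ) + b r) n) A)
    (B : Fin n → Finset t.Arc)
    (hB : CGame.IsOutcome (SNCGsp t (fun r x => a r * (x : ℝ) + b r) n) B) :
    CGame.SC (SNCGsp t (fun r x => a r * (x : ℝ) + b r) n) A ≤
      (4 / 3) * CGame.SC (SNCGsp t (fun r x => a r * (x : ℝ) + b r) n) B := by
  classical
  open SPAux Finset in
  obtain ⟨σ, hσ⟩ := hA
  set d : t.Arc → ℕ → ℝ := fun r x => a r * (x : ℝ) + b r with hd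
  have hM : Mono d := fun r i j hij =>
    add_le_add_left (mul_le_mul_of_nonneg_left (by exact_mod_cast hij : (i:ℝ) ≤ j) (ha r)) (b r)
  have hN : Nneg d := fun r k => add_nonneg (mul_nonneg (ha r) (Nat.cast_nonneg k)) (hb r)
  have hσ' : CGame.IsKLA 1 (shifted t d n (fun _ => 0)) (A ∘ σ) := hσ
  have hgreedy : GreedyOn d t.paths (fun _ => 0) (A ∘ σ) := extract t d n (fun _ => 0) (A ∘ σ) hσ'
  obtain ⟨hxR, hxopt⟩ := greedy_opt t d hM hN (A ∘ σ) hgreedy n le_rfl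
  have hyR : cb B n ∈ Reach t.paths n := outcome_reach B (fun j => hB j) n le_rfl
  set x : t.Arc → ℕ := cb (A ∘ σ) n with hx
  set y : t.Arc → ℕ := cb B n with hy
  have hT4 := ((tree_pkg t d hM hN).2.2.2 n n x y hxR hxopt hyR).2 le_rfl
  have hE0 : Esum d x y ≤ 0 := by simpa [Nat.sub_self] using hT4
  have hSA : CGame.SC (SNCGsp t d n) A = ∑ r, (x r : ℝ) * d r (x r) := by
    rw [← SC_perm t d n A σ, SC_formula]
  have hSB : CGame.SC (SNCGsp t d n) B = ∑ r, (y r : ℝ) * d r (y r) := SC_formula t d n B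
  have hid : (∑ r, (x r : ℝ) * d r (x r))
      = (∑ r, ((y r : ℝ) * d r (x r) + ((y r - x r : ℕ) : ℝ) * a r)) + Esum d x y := by
    have key : ∀ r : t.Arc, (x r : ℝ) * d r (x r)
        = ((y r : ℝ) * d r (x r) + ((y r - x r : ℕ) : ℝ) * a r)
          + (((x r - y r : ℕ) : ℝ) * d r (x r) - ((y r - x r : ℕ) : ℝ) * d r (x r + 1)) := by
      intro r
      have hc := cast_sub_sub (x r) (y r)
      have hdx : d r (x r) = a r * (x r : ℝ) + b r := rfl
      have hdx1 : d r (x r + 1) = a r * ((x r : ℝ) + 1) + b r := by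
        show a r * ((x r + 1 : ℕ) : ℝ) + b r = _
        push_cast; ring
      rw [hdx, hdx1]
      linear_combination (-(a r * (x r : ℝ) + b r)) * hc
    calc (∑ r, (x r : ℝ) * d r (x r))
        = ∑ r, (((y r : ℝ) * d r (x r) + ((y r - x r : ℕ) : ℝ) * a r)
          + (((x r - y r : ℕ) : ℝ) * d r (x r) - ((y r - x r : ℕ) : ℝ) * d r (x r + 1))) :=
          Finset.sum_congr rfl fun r _ => key r
      _ = _ := by rw [Finset.sum_add_distrib]; rfl
  have hsum_ineq : (∑ r, ((y r : ℝ) * d r (x r) + ((y r - x r : ℕ) : ℝ) * a r))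
      ≤ ∑ r, (a r * (y r : ℝ)^2 + a r * (x r : ℝ)^2 / 4 + b r * y r) := by
    refine Finset.sum_le_sum fun r _ => ?_
    have h := num_ineq (a r) (b r) (ha r) (hb r) (x r) (y r)
    exact h
  have hSB2 : (∑ r, (a r * (y r : ℝ)^2 + b r * y r)) = ∑ r, (y r : ℝ) * d r (y r) := by
    refine Finset.sum_congr rfl fun r _ => ?_
    show a r * (y r : ℝ)^2 + b r * y r = (y r : ℝ) * (a r * (y r : ℕ) + b r)
    ring
  have hax : (∑ r, a r * (x r : ℝ)^2) ≤ ∑ r, (x r : ℝ) * d r (x r) := by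
    refine Finset.sum_le_sum fun r _ => ?_
    show a r * (x r : ℝ)^2 ≤ (x r : ℝ) * (a r * (x r : ℕ) + b r)
    nlinarith [mul_nonneg (hb r) (Nat.cast_nonneg (α := ℝ) (x r)), sq_nonneg ((x r : ℝ))]
  have h2 : (∑ r, (a r * (y r : ℝ)^2 + a r * (x r : ℝ)^2 / 4 + b r * y r))
      = (∑ r, (a r * (y r : ℝ)^2 + b r * y r)) + (1/4) * ∑ r, a r * (x r : ℝ)^2 := by
    rw [Finset.mul_sum, ← Finset.sum_add_distrib]
    exact Finset.sum_congr rfl fun r _ => by ring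
  rw [hSA, hSB]
  linarith [hid, hE0, hsum_ineq, hSB2, hax, h2]
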